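/- Let X be a poset that can be partitioned into two sets A = {a_0 > a_1 > a_2 > ...} and B = {b_0 > b_1 > b_2 > ...}, each order-isomorphic to ω^d (an infinite strictly descending chain), such that a_i and b_i are incomparable in X for every i ∈ ℕ. Then there exists a subset C ⊆ X such that the linear sum C ⊕ ω (C with the induced order, with a chain of order type ω placed above it) is order-isomorphic to F_5 or to F_6. -/

import Mathlib

/-- `F₅ = (D₁ ⊔ ω^d) ⊕ ω`. -/
abbrev F5 : Type := (PUnit ⊕ ℕᵒᵈ) ⊕ₗ ℕ

/-- The poset `L` on `ℕ × {0,1}` with `(i,x) < (j,y)` iff `i > j`. -/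
def L6 : Type := ℕ × Bool

/-- The order relation of `L6`. -/
def L6.le (a b : ℕ × Bool) : Prop := b.1 < a.1 ∨ a = b

instance : PartialOrder L6 where
  le := L6.le
  le_refl _ := Or.inr rfl
  le_trans a b c hab hbc := by
    rcases hab with h | h
    · rcases hbc with h' | h'
      · exact Or.inl (h'.trans h)
      · exact Or.inl (h' ▸ h)
    · rcases hbc with h' | h'
      · exact Or.inl (h ▸ h')
      · exact Or.inr (h.trans h')
  le_antisymm a b hab hba := by
    rcases hab with h | h
    · rcases hba with h' | h'
      · exact absurd (h.trans h') (lt_irrefl _)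
      · exact h'.symm
    · exact h

/-- `F₆ = L ⊕ ω`. -/
abbrev F6 : Type := L6 ⊕ₗ ℕ

/-- Congruence of lexicographic sums of orders. -/
def mySumLexCongr {α β γ δ : Type*} [LE α] [LE β] [LE γ] [LE δ]
    (e₁ : α ≃o γ) (e₂ : β ≃o δ) : (α ⊕ₗ β) ≃o (γ ⊕ₗ δ) :=
  RelIso.sumLexCongr e₁ e₂

/-- An order-reflecting map gives an order iso onto its range. -/
noncomputable def myIsoRange {α β : Type*} [PartialOrder α] [Preorder β] (f : α → β)
    (hf : ∀ x y, f x ≤ f y ↔ x ≤ y) : α ≃o Set.range f where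
  toEquiv := Equiv.ofInjective f
    (fun x y h => le_antisymm ((hf x y).1 h.le) ((hf y x).1 h.ge))
  map_rel_iff' := by
    intro x y
    exact hf x y

/-- The `F5` case: a point `a i` with no `b j` below it. -/
lemma aux_F5 {X : Type*} [PartialOrder X] (a b : ℕ → X) (ha : StrictAnti a)
    (hb : StrictAnti b)
    (hdisj : ∀ i j : ℕ, a i ≠ b j)
    (hinc : ∀ i : ℕ, ¬ a i ≤ b i ∧ ¬ b i ≤ a i)
    (i : ℕ) (hi : ∀ j, ¬ b j ≤ a i) :
    ∃ C : Set X, Nonempty ((↥C ⊕ₗ ℕ) ≃o F5) := by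
  classical
  set f : PUnit ⊕ ℕᵒᵈ → X :=
    Sum.elim (fun _ => a i) (fun n => b (i + OrderDual.ofDual n)) with hfdef
  have hup : ∀ k : ℕ, ¬ a i ≤ b (i + k) := by
    intro k h
    exact (hinc i).1 (h.trans (hb.antitone (Nat.le_add_right i k)))
  have hf : ∀ x y : PUnit ⊕ ℕᵒᵈ, f x ≤ f y ↔ x ≤ y := by
    rintro (x | x) (y | y)
    · simp [hfdef, Sum.inl_le_inl_iff]
    · exact iff_of_false (hup _) Sum.not_inl_le_inr
    · exact iff_of_false (hi _) Sum.not_inr_le_inl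
    · rw [Sum.inr_le_inr_iff]
      show b (i + OrderDual.ofDual x) ≤ b (i + OrderDual.ofDual y) ↔
        OrderDual.ofDual y ≤ OrderDual.ofDual x
      rw [hb.le_iff_ge, add_le_add_iff_left]
  exact ⟨Set.range f, ⟨mySumLexCongr (myIsoRange f hf).symm (OrderIso.refl ℕ)⟩⟩

/-- The `F6` case: below every `a i` there is some `b`, and vice versa. -/
lemma aux_F6 {X : Type*} [PartialOrder X] (a b : ℕ → X) (ha : StrictAnti a)
    (hb : StrictAnti b)
    (hinc : ∀ i : ℕ, ¬ a i ≤ b i ∧ ¬ b i ≤ a i)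
    (h1 : ∀ i, ∃ j, b j < a i) (h2 : ∀ i, ∃ j, a j < b i) :
    ∃ C : Set X, Nonempty ((↥C ⊕ₗ ℕ) ≃o F6) := by
  classical
  choose g hg using h1
  choose g' hg' using h2
  let n : ℕ → ℕ := fun k => Nat.rec 0 (fun _ m => max (max (g m) (g' m)) (m + 1)) k
  have hsucc : ∀ k, n (k + 1) = max (max (g (n k)) (g' (n k))) (n k + 1) := fun _ => rfl
  have hmono : StrictMono n := by
    apply strictMono_nat_of_lt_succ
    intro k
    rw [hsucc]
    exact lt_of_lt_of_le (Nat.lt_succ_self _) (le_max_right _ _)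
  have hba : ∀ k, b (n (k + 1)) < a (n k) := by
    intro k
    exact lt_of_le_of_lt
      (hb.antitone ((le_max_left _ _).trans (le_max_left _ _) : g (n k) ≤ n (k + 1)))
      (hg (n k))
  have hab : ∀ k, a (n (k + 1)) < b (n k) := by
    intro k
    exact lt_of_le_of_lt
      (ha.antitone ((le_max_right _ _).trans (le_max_left _ _) : g' (n k) ≤ n (k + 1)))
      (hg' (n k))
  let f : ℕ × Bool → X := fun p => if p.2 then b (n p.1) else a (n p.1)
  -- strict drop between levels
  have keylt : ∀ k m : ℕ, m < k → ∀ x y : Bool, f (k, x) < f (m, y) := by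
    intro k m hmk x y
    have h1k : m + 1 ≤ k := hmk
    cases x <;> cases y <;> simp only [f]
    · -- a (n k) < a (n m)
      exact ha (hmono hmk)
    · -- a (n k) < b (n m)
      exact lt_of_le_of_lt (ha.antitone (hmono.monotone h1k)) (hab m)
    · -- b (n k) < a (n m)
      exact lt_of_le_of_lt (hb.antitone (hmono.monotone h1k)) (hba m)
    · exact hb (hmono hmk)
  have hf : ∀ p q : ℕ × Bool, f p ≤ f q ↔ L6.le p q := by
    rintro ⟨k, x⟩ ⟨m, y⟩
    constructor
    · intro h
      rcases lt_trichotomy k m with hkm | hkm | hkm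
      · exact absurd (h.trans_lt (keylt m k hkm y x)) (lt_irrefl _)
      · subst hkm
        cases x <;> cases y
        · exact Or.inr rfl
        · exact absurd h (hinc (n k)).1
        · exact absurd h (hinc (n k)).2
        · exact Or.inr rfl
      · exact Or.inl hkm
    · rintro (h | h)
      · exact (keylt k m h x y).le
      · rw [h]
  have hf' : ∀ p q : L6, f p ≤ f q ↔ p ≤ q := hf
  exact ⟨Set.range f, ⟨mySumLexCongr (myIsoRange (α := L6) f hf').symm (OrderIso.refl ℕ)⟩⟩

theorem two_chains_give_F5_or_F6 {X : Type*} [PartialOrder X]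
    (a b : ℕ → X) (ha : StrictAnti a) (hb : StrictAnti b)
    (hcover : ∀ x : X, (∃ i : ℕ, x = a i) ∨ (∃ i : ℕ, x = b i))
    (hdisj : ∀ i j : ℕ, a i ≠ b j)
    (hinc : ∀ i : ℕ, ¬ a i ≤ b i ∧ ¬ b i ≤ a i) :
    ∃ C : Set X, Nonempty ((↥C ⊕ₗ ℕ) ≃o F5) ∨ Nonempty ((↥C ⊕ₗ ℕ) ≃o F6) := by
  by_cases h1 : ∀ i, ∃ j, b j < a i
  · by_cases h2 : ∀ i, ∃ j, a j < b i
    · obtain ⟨C, hC⟩ := aux_F6 a b ha hb hinc h1 h2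
      exact ⟨C, Or.inr hC⟩
    · push_neg at h2
      obtain ⟨i, hi⟩ := h2
      have hi' : ∀ j, ¬ a j ≤ b i := fun j h =>
        hi j (lt_of_le_of_ne h (hdisj j i))
      obtain ⟨C, hC⟩ := aux_F5 b a hb ha (fun i j => (hdisj j i).symm)
        (fun i => ⟨(hinc i).2, (hinc i).1⟩) i hi'
      exact ⟨C, Or.inl hC⟩
  · push_neg at h1
    obtain ⟨i, hi⟩ := h1
    have hi' : ∀ j, ¬ b j ≤ a i := fun j h =>
      hi j (lt_of_le_of_ne h (Ne.symm (hdisj i j)))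
    obtain ⟨C, hC⟩ := aux_F5 a b ha hb hdisj hinc i hi'
    exact ⟨C, Or.inl hC⟩
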